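/- For a closed subspace Y of a Banach space X, the kernel of the map Q ∘ R_Y* : Y** → (J_X(X) + Y^{⊥⊥})/J_X(X) (where Q is the quotient map from X** and R_Y* : Y** → Y^{⊥⊥} is the isometric isomorphism induced by restriction) equals exactly the canonical image J_Y(Y) of Y in Y**. -/

import Mathlib

open NormedSpace Filter Topology
open scoped ENNReal

noncomputable section

/-- The annihilator of a subspace `Y ⊆ X` inside the continuous dual of `X`. -/
def annih {X : Type*} [SeminormedAddCommGroup X] [NormedSpace ℝ X] (Y : Submodule ℝ X) :
    Submodule ℝ (StrongDual ℝ X) where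
  carrier := {f | ∀ y ∈ Y, f y = 0}
  add_mem' := by
    intro a b ha hb y hy
    simp [ContinuousLinearMap.add_apply, ha y hy, hb y hy]
  zero_mem' := by intro y hy; rfl
  smul_mem' := by
    intro c f hf y hy
    simp [hf y hy]

/-- A Banach space is reflexive iff the canonical embedding into its bidual is surjective. -/
def BReflexive (X : Type*) [SeminormedAddCommGroup X] [NormedSpace ℝ X] : Prop :=
  Function.Surjective (inclusionInDoubleDual ℝ X)

/-- A Banach space is coreflexive iff `X**/J_X(X)` is reflexive. -/
def Coreflexive (X : Type*) [SeminormedAddCommGroup X] [NormedSpace ℝ X] : Prop :=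
  @BReflexive (@HasQuotient.Quotient _ _ Submodule.hasQuotient
      (LinearMap.range (inclusionInDoubleDual ℝ X).toLinearMap))
    (@Submodule.Quotient.seminormedAddCommGroup _ ContinuousLinearMap.toSeminormedAddCommGroup ℝ _ _
      (LinearMap.range (inclusionInDoubleDual ℝ X).toLinearMap))
    (@Submodule.Quotient.normedSpace _ ContinuousLinearMap.toSeminormedAddCommGroup ℝ _ _
      (LinearMap.range (inclusionInDoubleDual ℝ X).toLinearMap) ℝ _ _ _ _)

/-- The adjoint of a continuous linear map between normed spaces. -/
def adj {E F : Type*} [SeminormedAddCommGroup E] [NormedSpace ℝ E]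
    [SeminormedAddCommGroup F] [NormedSpace ℝ F] (f : E →L[ℝ] F) :
    StrongDual ℝ F →L[ℝ] StrongDual ℝ E :=
  (ContinuousLinearMap.compL ℝ E F ℝ).flip f

/-- `X` is weak*-sequentially dense in its bidual. -/
def WStarSeqDense (X : Type*) [SeminormedAddCommGroup X] [NormedSpace ℝ X] : Prop :=
  ∀ F : StrongDual ℝ (StrongDual ℝ X), ∃ x : ℕ → X, ∀ f : StrongDual ℝ X,
    Tendsto (fun n => inclusionInDoubleDual ℝ X (x n) f) atTop (𝓝 (F f))

/-- `x` is a point of weak-to-norm continuity of the closed unit ball of `X`. -/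
def wPC (X : Type*) [SeminormedAddCommGroup X] [NormedSpace ℝ X] (x : X) : Prop :=
  ∀ l : Filter X, (∀ᶠ y in l, ‖y‖ ≤ 1) →
    (∀ f : StrongDual ℝ X, Tendsto (fun y => f y) l (𝓝 (f x))) →
    Tendsto id l (𝓝 x)
theorem stmt16 (X : Type*) [NormedAddCommGroup X] [NormedSpace ℝ X] [CompleteSpace X]
    (Y : Submodule ℝ X) (hY : IsClosed (Y : Set X)) :
    ∀ F : StrongDual ℝ (StrongDual ℝ ↥Y),
      (adj (adj (Y.subtypeL)) F ∈ LinearMap.range (inclusionInDoubleDual ℝ X).toLinearMap ↔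
        F ∈ LinearMap.range (inclusionInDoubleDual ℝ ↥Y).toLinearMap) := by
  intro F
  constructor
  · rintro ⟨x, hx⟩
    -- hx : J_X x = adj (adj i) F, so for all f : X*, f x = F (f ∘ i)
    have key : ∀ f : StrongDual ℝ X, f x = F (adj Y.subtypeL f) := fun f =>
      congrFun (congrArg DFunLike.coe hx) f
    -- x ∈ Y
    have hxY : x ∈ Y := by
      by_contra hxY
      obtain ⟨f, u, hf⟩ := geometric_hahn_banach_closed_point (Submodule.convex Y) hY hxY
      have hf0 : ∀ y ∈ Y, f y = 0 := by
        intro y hy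
        by_contra h0
        have : ∀ t : ℝ, t * f y < u := fun t => by
          have := hf.1 (t • y) (Y.smul_mem t hy)
          simpa using this
        rcases lt_or_gt_of_ne h0 with h | h
        · have := this ((u + 1) / f y)
          rw [div_mul_cancel₀ _ (ne_of_lt h)] at this; linarith
        · have := this ((u + 1) / f y)
          rw [div_mul_cancel₀ _ (ne_of_gt h)] at this; linarith
      have hadj : adj Y.subtypeL f = 0 := by
        ext y
        exact hf0 y y.2
      have : f x = 0 := by rw [key f, hadj, map_zero]
      have h0u : (0:ℝ) < u := by simpa [hf0 0 Y.zero_mem] using hf.1 0 Y.zero_mem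
      linarith [hf.2]
    refine ⟨⟨x, hxY⟩, ?_⟩
    ext g
    obtain ⟨f, hfg, -⟩ := exists_extension_norm_eq Y g
    have h1 : adj Y.subtypeL f = g := by
      ext y; exact hfg y
    have h2 : inclusionInDoubleDual ℝ ↥Y ⟨x, hxY⟩ g = f x := (hfg ⟨x, hxY⟩).symm
    erw [h2, key f, h1]
  · rintro ⟨y, hy⟩
    refine ⟨(y : X), ?_⟩
    ext f
    simp [← hy, adj, inclusionInDoubleDual]
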